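/- For all integers i, j ≥ 0 and all signs ε, δ ∈ {1, -1}, the element x_i^ε x_j^δ belongs to G. -/

import Mathlib

set_option maxHeartbeats 1000000

noncomputable section

/-- The unit interval `[0,1]` as a type. -/
abbrev I : Type := Set.Icc (0:ℝ) 1

/-- The underlying function of the generator `x₀` of Thompson's group `F`. -/
def x0fun (t : ℝ) : ℝ := if t ≤ 1/4 then 2*t else if t ≤ 1/2 then t + 1/4 else t/2 + 1/2

/-- The inverse of `x0fun`. -/
def x0inv (t : ℝ) : ℝ := if t ≤ 1/2 then t/2 else if t ≤ 3/4 then t - 1/4 else 2*t - 1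

/-- The underlying function of the generator `x₁` of Thompson's group `F`. -/
def x1fun (t : ℝ) : ℝ :=
  if t ≤ 1/2 then t else if t ≤ 5/8 then 2*t - 1/2 else if t ≤ 3/4 then t + 1/8 else t/2 + 1/2

/-- The inverse of `x1fun`. -/
def x1inv (t : ℝ) : ℝ :=
  if t ≤ 1/2 then t else if t ≤ 3/4 then t/2 + 1/4 else if t ≤ 7/8 then t - 1/8 else 2*t - 1

/-- The generator `x₀` of Thompson's group `F`, as a bijection of `[0,1]`. -/
def x₀ : Equiv.Perm I where
  toFun t := ⟨x0fun t.1, by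
    obtain ⟨h0, h1⟩ := Set.mem_Icc.mp t.2
    simp only [Set.mem_Icc, x0fun]
    split_ifs <;> constructor <;> linarith⟩
  invFun t := ⟨x0inv t.1, by
    obtain ⟨h0, h1⟩ := Set.mem_Icc.mp t.2
    simp only [Set.mem_Icc, x0inv]
    split_ifs <;> constructor <;> linarith⟩
  left_inv t := by
    obtain ⟨h0, h1⟩ := Set.mem_Icc.mp t.2
    apply Subtype.ext
    show x0inv (x0fun t.1) = t.1
    simp only [x0fun, x0inv]
    split_ifs <;> linarith
  right_inv t := by
    obtain ⟨h0, h1⟩ := Set.mem_Icc.mp t.2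
    apply Subtype.ext
    show x0fun (x0inv t.1) = t.1
    simp only [x0fun, x0inv]
    split_ifs <;> linarith

/-- The generator `x₁` of Thompson's group `F`, as a bijection of `[0,1]`. -/
def x₁ : Equiv.Perm I where
  toFun t := ⟨x1fun t.1, by
    obtain ⟨h0, h1⟩ := Set.mem_Icc.mp t.2
    simp only [Set.mem_Icc, x1fun]
    split_ifs <;> constructor <;> linarith⟩
  invFun t := ⟨x1inv t.1, by
    obtain ⟨h0, h1⟩ := Set.mem_Icc.mp t.2
    simp only [Set.mem_Icc, x1inv]
    split_ifs <;> constructor <;> linarith⟩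
  left_inv t := by
    obtain ⟨h0, h1⟩ := Set.mem_Icc.mp t.2
    apply Subtype.ext
    show x1inv (x1fun t.1) = t.1
    simp only [x1fun, x1inv]
    split_ifs <;> linarith
  right_inv t := by
    obtain ⟨h0, h1⟩ := Set.mem_Icc.mp t.2
    apply Subtype.ext
    show x1fun (x1inv t.1) = t.1
    simp only [x1fun, x1inv]
    split_ifs <;> linarith

/-- Composition in Thompson's group `F` is from left to right: the product `f·g` in the paper
is the function `t ↦ g (f t)`.  In Lean, `Equiv.Perm` multiplication is composition from right
to left: `(f * g) t = f (g t)`.  Hence a paper product `a₁ a₂ ⋯ aₙ` corresponds to the Lean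
product `aₙ * ⋯ * a₂ * a₁`.

`x i` is the standard generator `x_i` of Thompson's group `F`: here `x_0, x_1` are the explicit
piecewise-linear maps, and for `i ≥ 1`, `x_{i+1} = x_0^{-i} x_1 x_0^{i}` (left-to-right
composition), which in Lean's convention is `x₀ ^ i * x₁ * (x₀ ^ i)⁻¹`. -/
def x (i : ℕ) : Equiv.Perm I := if i = 0 then x₀ else x₀ ^ (i-1) * x₁ * (x₀ ^ (i-1))⁻¹

/-- Thompson's group `F`, realized as the group of increasing piecewise-linear homeomorphisms of
`[0,1]` with dyadic breakpoints and slopes powers of 2; it is generated by `x_0` and `x_1`. -/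
def F : Subgroup (Equiv.Perm I) := Subgroup.closure {x 0, x 1}

/-- The subgroup `G = ⟨x_0x_2, x_1x_2⟩` of `F` (products written left-to-right, so
`x_0x_2` is the Lean element `x 2 * x 0`). -/
def G : Subgroup (Equiv.Perm I) := Subgroup.closure {x 2 * x 0, x 2 * x 1}

/-- Jones' subgroup `F⃗ = ⟨x_0x_1, x_1x_2, x_2x_3⟩` of `F` (products written left-to-right). -/
def JonesF : Subgroup (Equiv.Perm I) := Subgroup.closure {x 1 * x 0, x 2 * x 1, x 3 * x 2}

lemma x_mem_F (i : ℕ) : x i ∈ F := by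
  have h0 : x 0 ∈ F := Subgroup.subset_closure (by simp)
  have h1 : x 1 ∈ F := Subgroup.subset_closure (by simp)
  have hx0 : x₀ ∈ F := by simpa [x] using h0
  have hx1 : x₁ ∈ F := by simpa [x] using h1
  rcases Nat.eq_zero_or_pos i with h | h
  · subst h; exact h0
  · have : x i = x₀ ^ (i-1) * x₁ * (x₀ ^ (i-1))⁻¹ := by
      simp [x, Nat.pos_iff_ne_zero.mp h]
    rw [this]
    exact mul_mem (mul_mem (pow_mem hx0 _) hx1) (inv_mem (pow_mem hx0 _))

lemma y0_mem_G : x 2 * x 0 ∈ G := Subgroup.subset_closure (by simp)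

lemma y1_mem_G : x 2 * x 1 ∈ G := Subgroup.subset_closure (by simp)

/-- The length `|w|` of an element of `F`: the minimal `n` such that `w` is a product of `n`
elements of `{x_i^{±1} : i ≥ 0}`.  This equals the length of the normal form of `w`. -/
def len (w : Equiv.Perm I) : ℕ :=
  sInf {n | ∃ l : List (Equiv.Perm I), l.length = n ∧
    (∀ a ∈ l, ∃ i : ℕ, a = x i ∨ a = (x i)⁻¹) ∧ l.prod = w}

/-- The element of `F` given by the positive word `x_{i_1} x_{i_2} ⋯ x_{i_n}` (composition from
left to right), where `l = [i_1, i_2, …, i_n]`.  Since Lean's multiplication of permutations is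
composition from right to left, this is the Lean product of the reversed list of letters. -/
def pp (l : List ℕ) : Equiv.Perm I := ((l.map x).reverse).prod

/-- `l = [i_1, …, i_n]` encodes a *block*: a positive normal form `x_{i_1}⋯x_{i_n}`
(so `i_1 ≤ ⋯ ≤ i_n`) with `i_1 ≠ i_n` and `i_j < i_1 + j` for all `j = 1, …, n`
(here with 0-based indexing: `l[k] < l[0] + k + 1`). -/
def IsBlock (l : List ℕ) : Prop :=
  l ≠ [] ∧ l.Pairwise (· ≤ ·) ∧ l.headI ≠ l.getLastD 0 ∧
    ∀ k < l.length, l.getD k 0 < l.headI + k + 1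

/-- The double coset `F⃗ a F⃗` of Jones' subgroup.  (As a set this does not depend on the
composition convention, since `u, v` range over all of `F⃗`.) -/
def dCoset (a : Equiv.Perm I) : Set (Equiv.Perm I) :=
  {w | ∃ u ∈ JonesF, ∃ v ∈ JonesF, w = v * a * u}

/-- A real number is dyadic if it has the form `a / 2^n` with `a, n` natural numbers. -/
def IsDyadic (α : ℝ) : Prop := ∃ (a : ℕ) (n : ℕ), α = a / 2^n

/-- The subgroup of all permutations fixing every point of `U`. -/
def fixing (U : Set ℝ) : Subgroup (Equiv.Perm I) where
  carrier := {g | ∀ t : I, (t : ℝ) ∈ U → g t = t}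
  one_mem' := fun _ _ => rfl
  mul_mem' := by
    intro a b ha hb t ht
    simp only [Equiv.Perm.mul_apply]
    rw [hb t ht, ha t ht]
  inv_mem' := by
    intro a ha t ht
    conv_lhs => rw [← ha t ht]
    exact Equiv.symm_apply_apply a t

/-- `H_U`: the stabilizer in `F` of the finite set `U ⊂ (0,1)`, i.e. the subgroup of all
elements of `F` fixing every point of `U`. -/
def HU (U : Set ℝ) : Subgroup (Equiv.Perm I) := F ⊓ fixing U

lemma A12_i0 (t : ℝ) (h1 : 0 ≤ t) (h2 : t ≤ 1/2) :
    x1fun (x0fun (x1fun (x0inv t))) = x0fun (x0fun (x1fun (x0inv (x0inv (x1fun t))))) := by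
  have eL1 : x0inv t = ((1/2) * t + (0)) := by unfold x0inv; split_ifs <;> linarith
  have eL2 : x1fun ((1/2) * t + (0)) = ((1/2) * t + (0)) := by unfold x1fun; split_ifs <;> linarith
  have eL3 : x0fun ((1/2) * t + (0)) = t := by unfold x0fun; split_ifs <;> linarith
  have eL4 : x1fun t = t := by unfold x1fun; split_ifs <;> linarith
  have eR5 : x1fun t = t := by unfold x1fun; split_ifs <;> linarith
  have eR6 : x0inv t = ((1/2) * t + (0)) := by unfold x0inv; split_ifs <;> linarith
  have eR7 : x0inv ((1/2) * t + (0)) = ((1/4) * t + (0)) := by unfold x0inv; split_ifs <;> linarith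
  have eR8 : x1fun ((1/4) * t + (0)) = ((1/4) * t + (0)) := by unfold x1fun; split_ifs <;> linarith
  have eR9 : x0fun ((1/4) * t + (0)) = ((1/2) * t + (0)) := by unfold x0fun; split_ifs <;> linarith
  have eR10 : x0fun ((1/2) * t + (0)) = t := by unfold x0fun; split_ifs <;> linarith
  simp only [eL1, eL2, eL3, eL4, eR5, eR6, eR7, eR8, eR9, eR10]
  all_goals ring

lemma A12_i1 (t : ℝ) (h1 : 1/2 < t) (h2 : t ≤ 5/8) :
    x1fun (x0fun (x1fun (x0inv t))) = x0fun (x0fun (x1fun (x0inv (x0inv (x1fun t))))) := by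
  have eL1 : x0inv t = ((1) * t + (-1/4)) := by unfold x0inv; split_ifs <;> linarith
  have eL2 : x1fun ((1) * t + (-1/4)) = ((1) * t + (-1/4)) := by unfold x1fun; split_ifs <;> linarith
  have eL3 : x0fun ((1) * t + (-1/4)) = t := by unfold x0fun; split_ifs <;> linarith
  have eL4 : x1fun t = ((2) * t + (-1/2)) := by unfold x1fun; split_ifs <;> linarith
  have eR5 : x1fun t = ((2) * t + (-1/2)) := by unfold x1fun; split_ifs <;> linarith
  have eR6 : x0inv ((2) * t + (-1/2)) = ((2) * t + (-3/4)) := by unfold x0inv; split_ifs <;> linarith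
  have eR7 : x0inv ((2) * t + (-3/4)) = ((1) * t + (-3/8)) := by unfold x0inv; split_ifs <;> linarith
  have eR8 : x1fun ((1) * t + (-3/8)) = ((1) * t + (-3/8)) := by unfold x1fun; split_ifs <;> linarith
  have eR9 : x0fun ((1) * t + (-3/8)) = ((2) * t + (-3/4)) := by unfold x0fun; split_ifs <;> linarith
  have eR10 : x0fun ((2) * t + (-3/4)) = ((2) * t + (-1/2)) := by unfold x0fun; split_ifs <;> linarith
  simp only [eL1, eL2, eL3, eL4, eR5, eR6, eR7, eR8, eR9, eR10]
  all_goals ring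

lemma A12_i2 (t : ℝ) (h1 : 5/8 < t) (h2 : t ≤ 3/4) :
    x1fun (x0fun (x1fun (x0inv t))) = x0fun (x0fun (x1fun (x0inv (x0inv (x1fun t))))) := by
  have eL1 : x0inv t = ((1) * t + (-1/4)) := by unfold x0inv; split_ifs <;> linarith
  have eL2 : x1fun ((1) * t + (-1/4)) = ((1) * t + (-1/4)) := by unfold x1fun; split_ifs <;> linarith
  have eL3 : x0fun ((1) * t + (-1/4)) = t := by unfold x0fun; split_ifs <;> linarith
  have eL4 : x1fun t = ((1) * t + (1/8)) := by unfold x1fun; split_ifs <;> linarith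
  have eR5 : x1fun t = ((1) * t + (1/8)) := by unfold x1fun; split_ifs <;> linarith
  have eR6 : x0inv ((1) * t + (1/8)) = ((2) * t + (-3/4)) := by unfold x0inv; split_ifs <;> linarith
  have eR7 : x0inv ((2) * t + (-3/4)) = ((2) * t + (-1)) := by unfold x0inv; split_ifs <;> linarith
  have eR8 : x1fun ((2) * t + (-1)) = ((2) * t + (-1)) := by unfold x1fun; split_ifs <;> linarith
  have eR9 : x0fun ((2) * t + (-1)) = ((2) * t + (-3/4)) := by unfold x0fun; split_ifs <;> linarith
  have eR10 : x0fun ((2) * t + (-3/4)) = ((1) * t + (1/8)) := by unfold x0fun; split_ifs <;> linarith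
  simp only [eL1, eL2, eL3, eL4, eR5, eR6, eR7, eR8, eR9, eR10]
  all_goals ring

lemma A12_i3 (t : ℝ) (h1 : 3/4 < t) (h2 : t ≤ 13/16) :
    x1fun (x0fun (x1fun (x0inv t))) = x0fun (x0fun (x1fun (x0inv (x0inv (x1fun t))))) := by
  have eL1 : x0inv t = ((2) * t + (-1)) := by unfold x0inv; split_ifs <;> linarith
  have eL2 : x1fun ((2) * t + (-1)) = ((4) * t + (-5/2)) := by unfold x1fun; split_ifs <;> linarith
  have eL3 : x0fun ((4) * t + (-5/2)) = ((2) * t + (-3/4)) := by unfold x0fun; split_ifs <;> linarith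
  have eL4 : x1fun ((2) * t + (-3/4)) = ((1) * t + (1/8)) := by unfold x1fun; split_ifs <;> linarith
  have eR5 : x1fun t = ((1/2) * t + (1/2)) := by unfold x1fun; split_ifs <;> linarith
  have eR6 : x0inv ((1/2) * t + (1/2)) = t := by unfold x0inv; split_ifs <;> linarith
  have eR7 : x0inv t = ((2) * t + (-1)) := by unfold x0inv; split_ifs <;> linarith
  have eR8 : x1fun ((2) * t + (-1)) = ((4) * t + (-5/2)) := by unfold x1fun; split_ifs <;> linarith
  have eR9 : x0fun ((4) * t + (-5/2)) = ((2) * t + (-3/4)) := by unfold x0fun; split_ifs <;> linarith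
  have eR10 : x0fun ((2) * t + (-3/4)) = ((1) * t + (1/8)) := by unfold x0fun; split_ifs <;> linarith
  simp only [eL1, eL2, eL3, eL4, eR5, eR6, eR7, eR8, eR9, eR10]
  all_goals ring

lemma A12_i4 (t : ℝ) (h1 : 13/16 < t) (h2 : t ≤ 7/8) :
    x1fun (x0fun (x1fun (x0inv t))) = x0fun (x0fun (x1fun (x0inv (x0inv (x1fun t))))) := by
  have eL1 : x0inv t = ((2) * t + (-1)) := by unfold x0inv; split_ifs <;> linarith
  have eL2 : x1fun ((2) * t + (-1)) = ((2) * t + (-7/8)) := by unfold x1fun; split_ifs <;> linarith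
  have eL3 : x0fun ((2) * t + (-7/8)) = ((1) * t + (1/16)) := by unfold x0fun; split_ifs <;> linarith
  have eL4 : x1fun ((1) * t + (1/16)) = ((1/2) * t + (17/32)) := by unfold x1fun; split_ifs <;> linarith
  have eR5 : x1fun t = ((1/2) * t + (1/2)) := by unfold x1fun; split_ifs <;> linarith
  have eR6 : x0inv ((1/2) * t + (1/2)) = t := by unfold x0inv; split_ifs <;> linarith
  have eR7 : x0inv t = ((2) * t + (-1)) := by unfold x0inv; split_ifs <;> linarith
  have eR8 : x1fun ((2) * t + (-1)) = ((2) * t + (-7/8)) := by unfold x1fun; split_ifs <;> linarith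
  have eR9 : x0fun ((2) * t + (-7/8)) = ((1) * t + (1/16)) := by unfold x0fun; split_ifs <;> linarith
  have eR10 : x0fun ((1) * t + (1/16)) = ((1/2) * t + (17/32)) := by unfold x0fun; split_ifs <;> linarith
  simp only [eL1, eL2, eL3, eL4, eR5, eR6, eR7, eR8, eR9, eR10]
  all_goals ring

lemma A12_i5 (t : ℝ) (h1 : 7/8 < t) (h2 : t ≤ 1) :
    x1fun (x0fun (x1fun (x0inv t))) = x0fun (x0fun (x1fun (x0inv (x0inv (x1fun t))))) := by
  have eL1 : x0inv t = ((2) * t + (-1)) := by unfold x0inv; split_ifs <;> linarith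
  have eL2 : x1fun ((2) * t + (-1)) = t := by unfold x1fun; split_ifs <;> linarith
  have eL3 : x0fun t = ((1/2) * t + (1/2)) := by unfold x0fun; split_ifs <;> linarith
  have eL4 : x1fun ((1/2) * t + (1/2)) = ((1/4) * t + (3/4)) := by unfold x1fun; split_ifs <;> linarith
  have eR5 : x1fun t = ((1/2) * t + (1/2)) := by unfold x1fun; split_ifs <;> linarith
  have eR6 : x0inv ((1/2) * t + (1/2)) = t := by unfold x0inv; split_ifs <;> linarith
  have eR7 : x0inv t = ((2) * t + (-1)) := by unfold x0inv; split_ifs <;> linarith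
  have eR8 : x1fun ((2) * t + (-1)) = t := by unfold x1fun; split_ifs <;> linarith
  have eR9 : x0fun t = ((1/2) * t + (1/2)) := by unfold x0fun; split_ifs <;> linarith
  have eR10 : x0fun ((1/2) * t + (1/2)) = ((1/4) * t + (3/4)) := by unfold x0fun; split_ifs <;> linarith
  simp only [eL1, eL2, eL3, eL4, eR5, eR6, eR7, eR8, eR9, eR10]
  all_goals ring

lemma A12 (t : ℝ) (ht0 : 0 ≤ t) (ht1 : t ≤ 1) :
    x1fun (x0fun (x1fun (x0inv t))) = x0fun (x0fun (x1fun (x0inv (x0inv (x1fun t))))) := by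
  rcases le_or_gt t (1/2) with hc0|hc0
  · exact A12_i0 t ht0 hc0
  rcases le_or_gt t (5/8) with hc1|hc1
  · exact A12_i1 t hc0 hc1
  rcases le_or_gt t (3/4) with hc2|hc2
  · exact A12_i2 t hc1 hc2
  rcases le_or_gt t (13/16) with hc3|hc3
  · exact A12_i3 t hc2 hc3
  rcases le_or_gt t (7/8) with hc4|hc4
  · exact A12_i4 t hc3 hc4
  exact A12_i5 t hc4 ht1

lemma A13_i0 (t : ℝ) (h1 : 0 ≤ t) (h2 : t ≤ 1/2) :
    x1fun (x0fun (x0fun (x1fun (x0inv (x0inv t))))) = x0fun (x0fun (x0fun (x1fun (x0inv (x0inv (x0inv (x1fun t))))))) := by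
  have eL1 : x0inv t = ((1/2) * t + (0)) := by unfold x0inv; split_ifs <;> linarith
  have eL2 : x0inv ((1/2) * t + (0)) = ((1/4) * t + (0)) := by unfold x0inv; split_ifs <;> linarith
  have eL3 : x1fun ((1/4) * t + (0)) = ((1/4) * t + (0)) := by unfold x1fun; split_ifs <;> linarith
  have eL4 : x0fun ((1/4) * t + (0)) = ((1/2) * t + (0)) := by unfold x0fun; split_ifs <;> linarith
  have eL5 : x0fun ((1/2) * t + (0)) = t := by unfold x0fun; split_ifs <;> linarith
  have eL6 : x1fun t = t := by unfold x1fun; split_ifs <;> linarith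
  have eR7 : x1fun t = t := by unfold x1fun; split_ifs <;> linarith
  have eR8 : x0inv t = ((1/2) * t + (0)) := by unfold x0inv; split_ifs <;> linarith
  have eR9 : x0inv ((1/2) * t + (0)) = ((1/4) * t + (0)) := by unfold x0inv; split_ifs <;> linarith
  have eR10 : x0inv ((1/4) * t + (0)) = ((1/8) * t + (0)) := by unfold x0inv; split_ifs <;> linarith
  have eR11 : x1fun ((1/8) * t + (0)) = ((1/8) * t + (0)) := by unfold x1fun; split_ifs <;> linarith
  have eR12 : x0fun ((1/8) * t + (0)) = ((1/4) * t + (0)) := by unfold x0fun; split_ifs <;> linarith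
  have eR13 : x0fun ((1/4) * t + (0)) = ((1/2) * t + (0)) := by unfold x0fun; split_ifs <;> linarith
  have eR14 : x0fun ((1/2) * t + (0)) = t := by unfold x0fun; split_ifs <;> linarith
  simp only [eL1, eL2, eL3, eL4, eL5, eL6, eR7, eR8, eR9, eR10, eR11, eR12, eR13, eR14]
  all_goals ring

lemma A13_i1 (t : ℝ) (h1 : 1/2 < t) (h2 : t ≤ 5/8) :
    x1fun (x0fun (x0fun (x1fun (x0inv (x0inv t))))) = x0fun (x0fun (x0fun (x1fun (x0inv (x0inv (x0inv (x1fun t))))))) := by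
  have eL1 : x0inv t = ((1) * t + (-1/4)) := by unfold x0inv; split_ifs <;> linarith
  have eL2 : x0inv ((1) * t + (-1/4)) = ((1/2) * t + (-1/8)) := by unfold x0inv; split_ifs <;> linarith
  have eL3 : x1fun ((1/2) * t + (-1/8)) = ((1/2) * t + (-1/8)) := by unfold x1fun; split_ifs <;> linarith
  have eL4 : x0fun ((1/2) * t + (-1/8)) = ((1) * t + (-1/4)) := by unfold x0fun; split_ifs <;> linarith
  have eL5 : x0fun ((1) * t + (-1/4)) = t := by unfold x0fun; split_ifs <;> linarith
  have eL6 : x1fun t = ((2) * t + (-1/2)) := by unfold x1fun; split_ifs <;> linarith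
  have eR7 : x1fun t = ((2) * t + (-1/2)) := by unfold x1fun; split_ifs <;> linarith
  have eR8 : x0inv ((2) * t + (-1/2)) = ((2) * t + (-3/4)) := by unfold x0inv; split_ifs <;> linarith
  have eR9 : x0inv ((2) * t + (-3/4)) = ((1) * t + (-3/8)) := by unfold x0inv; split_ifs <;> linarith
  have eR10 : x0inv ((1) * t + (-3/8)) = ((1/2) * t + (-3/16)) := by unfold x0inv; split_ifs <;> linarith
  have eR11 : x1fun ((1/2) * t + (-3/16)) = ((1/2) * t + (-3/16)) := by unfold x1fun; split_ifs <;> linarith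
  have eR12 : x0fun ((1/2) * t + (-3/16)) = ((1) * t + (-3/8)) := by unfold x0fun; split_ifs <;> linarith
  have eR13 : x0fun ((1) * t + (-3/8)) = ((2) * t + (-3/4)) := by unfold x0fun; split_ifs <;> linarith
  have eR14 : x0fun ((2) * t + (-3/4)) = ((2) * t + (-1/2)) := by unfold x0fun; split_ifs <;> linarith
  simp only [eL1, eL2, eL3, eL4, eL5, eL6, eR7, eR8, eR9, eR10, eR11, eR12, eR13, eR14]
  all_goals ring

lemma A13_i2 (t : ℝ) (h1 : 5/8 < t) (h2 : t ≤ 3/4) :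
    x1fun (x0fun (x0fun (x1fun (x0inv (x0inv t))))) = x0fun (x0fun (x0fun (x1fun (x0inv (x0inv (x0inv (x1fun t))))))) := by
  have eL1 : x0inv t = ((1) * t + (-1/4)) := by unfold x0inv; split_ifs <;> linarith
  have eL2 : x0inv ((1) * t + (-1/4)) = ((1/2) * t + (-1/8)) := by unfold x0inv; split_ifs <;> linarith
  have eL3 : x1fun ((1/2) * t + (-1/8)) = ((1/2) * t + (-1/8)) := by unfold x1fun; split_ifs <;> linarith
  have eL4 : x0fun ((1/2) * t + (-1/8)) = ((1) * t + (-1/4)) := by unfold x0fun; split_ifs <;> linarith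
  have eL5 : x0fun ((1) * t + (-1/4)) = t := by unfold x0fun; split_ifs <;> linarith
  have eL6 : x1fun t = ((1) * t + (1/8)) := by unfold x1fun; split_ifs <;> linarith
  have eR7 : x1fun t = ((1) * t + (1/8)) := by unfold x1fun; split_ifs <;> linarith
  have eR8 : x0inv ((1) * t + (1/8)) = ((2) * t + (-3/4)) := by unfold x0inv; split_ifs <;> linarith
  have eR9 : x0inv ((2) * t + (-3/4)) = ((2) * t + (-1)) := by unfold x0inv; split_ifs <;> linarith
  have eR10 : x0inv ((2) * t + (-1)) = ((1) * t + (-1/2)) := by unfold x0inv; split_ifs <;> linarith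
  have eR11 : x1fun ((1) * t + (-1/2)) = ((1) * t + (-1/2)) := by unfold x1fun; split_ifs <;> linarith
  have eR12 : x0fun ((1) * t + (-1/2)) = ((2) * t + (-1)) := by unfold x0fun; split_ifs <;> linarith
  have eR13 : x0fun ((2) * t + (-1)) = ((2) * t + (-3/4)) := by unfold x0fun; split_ifs <;> linarith
  have eR14 : x0fun ((2) * t + (-3/4)) = ((1) * t + (1/8)) := by unfold x0fun; split_ifs <;> linarith
  simp only [eL1, eL2, eL3, eL4, eL5, eL6, eR7, eR8, eR9, eR10, eR11, eR12, eR13, eR14]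
  all_goals ring

lemma A13_i3 (t : ℝ) (h1 : 3/4 < t) (h2 : t ≤ 7/8) :
    x1fun (x0fun (x0fun (x1fun (x0inv (x0inv t))))) = x0fun (x0fun (x0fun (x1fun (x0inv (x0inv (x0inv (x1fun t))))))) := by
  have eL1 : x0inv t = ((2) * t + (-1)) := by unfold x0inv; split_ifs <;> linarith
  have eL2 : x0inv ((2) * t + (-1)) = ((2) * t + (-5/4)) := by unfold x0inv; split_ifs <;> linarith
  have eL3 : x1fun ((2) * t + (-5/4)) = ((2) * t + (-5/4)) := by unfold x1fun; split_ifs <;> linarith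
  have eL4 : x0fun ((2) * t + (-5/4)) = ((2) * t + (-1)) := by unfold x0fun; split_ifs <;> linarith
  have eL5 : x0fun ((2) * t + (-1)) = t := by unfold x0fun; split_ifs <;> linarith
  have eL6 : x1fun t = ((1/2) * t + (1/2)) := by unfold x1fun; split_ifs <;> linarith
  have eR7 : x1fun t = ((1/2) * t + (1/2)) := by unfold x1fun; split_ifs <;> linarith
  have eR8 : x0inv ((1/2) * t + (1/2)) = t := by unfold x0inv; split_ifs <;> linarith
  have eR9 : x0inv t = ((2) * t + (-1)) := by unfold x0inv; split_ifs <;> linarith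
  have eR10 : x0inv ((2) * t + (-1)) = ((2) * t + (-5/4)) := by unfold x0inv; split_ifs <;> linarith
  have eR11 : x1fun ((2) * t + (-5/4)) = ((2) * t + (-5/4)) := by unfold x1fun; split_ifs <;> linarith
  have eR12 : x0fun ((2) * t + (-5/4)) = ((2) * t + (-1)) := by unfold x0fun; split_ifs <;> linarith
  have eR13 : x0fun ((2) * t + (-1)) = t := by unfold x0fun; split_ifs <;> linarith
  have eR14 : x0fun t = ((1/2) * t + (1/2)) := by unfold x0fun; split_ifs <;> linarith
  simp only [eL1, eL2, eL3, eL4, eL5, eL6, eR7, eR8, eR9, eR10, eR11, eR12, eR13, eR14]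
  all_goals ring

lemma A13_i4 (t : ℝ) (h1 : 7/8 < t) (h2 : t ≤ 29/32) :
    x1fun (x0fun (x0fun (x1fun (x0inv (x0inv t))))) = x0fun (x0fun (x0fun (x1fun (x0inv (x0inv (x0inv (x1fun t))))))) := by
  have eL1 : x0inv t = ((2) * t + (-1)) := by unfold x0inv; split_ifs <;> linarith
  have eL2 : x0inv ((2) * t + (-1)) = ((4) * t + (-3)) := by unfold x0inv; split_ifs <;> linarith
  have eL3 : x1fun ((4) * t + (-3)) = ((8) * t + (-13/2)) := by unfold x1fun; split_ifs <;> linarith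
  have eL4 : x0fun ((8) * t + (-13/2)) = ((4) * t + (-11/4)) := by unfold x0fun; split_ifs <;> linarith
  have eL5 : x0fun ((4) * t + (-11/4)) = ((2) * t + (-7/8)) := by unfold x0fun; split_ifs <;> linarith
  have eL6 : x1fun ((2) * t + (-7/8)) = ((1) * t + (1/16)) := by unfold x1fun; split_ifs <;> linarith
  have eR7 : x1fun t = ((1/2) * t + (1/2)) := by unfold x1fun; split_ifs <;> linarith
  have eR8 : x0inv ((1/2) * t + (1/2)) = t := by unfold x0inv; split_ifs <;> linarith
  have eR9 : x0inv t = ((2) * t + (-1)) := by unfold x0inv; split_ifs <;> linarith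
  have eR10 : x0inv ((2) * t + (-1)) = ((4) * t + (-3)) := by unfold x0inv; split_ifs <;> linarith
  have eR11 : x1fun ((4) * t + (-3)) = ((8) * t + (-13/2)) := by unfold x1fun; split_ifs <;> linarith
  have eR12 : x0fun ((8) * t + (-13/2)) = ((4) * t + (-11/4)) := by unfold x0fun; split_ifs <;> linarith
  have eR13 : x0fun ((4) * t + (-11/4)) = ((2) * t + (-7/8)) := by unfold x0fun; split_ifs <;> linarith
  have eR14 : x0fun ((2) * t + (-7/8)) = ((1) * t + (1/16)) := by unfold x0fun; split_ifs <;> linarith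
  simp only [eL1, eL2, eL3, eL4, eL5, eL6, eR7, eR8, eR9, eR10, eR11, eR12, eR13, eR14]
  all_goals ring

lemma A13_i5 (t : ℝ) (h1 : 29/32 < t) (h2 : t ≤ 15/16) :
    x1fun (x0fun (x0fun (x1fun (x0inv (x0inv t))))) = x0fun (x0fun (x0fun (x1fun (x0inv (x0inv (x0inv (x1fun t))))))) := by
  have eL1 : x0inv t = ((2) * t + (-1)) := by unfold x0inv; split_ifs <;> linarith
  have eL2 : x0inv ((2) * t + (-1)) = ((4) * t + (-3)) := by unfold x0inv; split_ifs <;> linarith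
  have eL3 : x1fun ((4) * t + (-3)) = ((4) * t + (-23/8)) := by unfold x1fun; split_ifs <;> linarith
  have eL4 : x0fun ((4) * t + (-23/8)) = ((2) * t + (-15/16)) := by unfold x0fun; split_ifs <;> linarith
  have eL5 : x0fun ((2) * t + (-15/16)) = ((1) * t + (1/32)) := by unfold x0fun; split_ifs <;> linarith
  have eL6 : x1fun ((1) * t + (1/32)) = ((1/2) * t + (33/64)) := by unfold x1fun; split_ifs <;> linarith
  have eR7 : x1fun t = ((1/2) * t + (1/2)) := by unfold x1fun; split_ifs <;> linarith
  have eR8 : x0inv ((1/2) * t + (1/2)) = t := by unfold x0inv; split_ifs <;> linarith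
  have eR9 : x0inv t = ((2) * t + (-1)) := by unfold x0inv; split_ifs <;> linarith
  have eR10 : x0inv ((2) * t + (-1)) = ((4) * t + (-3)) := by unfold x0inv; split_ifs <;> linarith
  have eR11 : x1fun ((4) * t + (-3)) = ((4) * t + (-23/8)) := by unfold x1fun; split_ifs <;> linarith
  have eR12 : x0fun ((4) * t + (-23/8)) = ((2) * t + (-15/16)) := by unfold x0fun; split_ifs <;> linarith
  have eR13 : x0fun ((2) * t + (-15/16)) = ((1) * t + (1/32)) := by unfold x0fun; split_ifs <;> linarith
  have eR14 : x0fun ((1) * t + (1/32)) = ((1/2) * t + (33/64)) := by unfold x0fun; split_ifs <;> linarith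
  simp only [eL1, eL2, eL3, eL4, eL5, eL6, eR7, eR8, eR9, eR10, eR11, eR12, eR13, eR14]
  all_goals ring

lemma A13_i6 (t : ℝ) (h1 : 15/16 < t) (h2 : t ≤ 1) :
    x1fun (x0fun (x0fun (x1fun (x0inv (x0inv t))))) = x0fun (x0fun (x0fun (x1fun (x0inv (x0inv (x0inv (x1fun t))))))) := by
  have eL1 : x0inv t = ((2) * t + (-1)) := by unfold x0inv; split_ifs <;> linarith
  have eL2 : x0inv ((2) * t + (-1)) = ((4) * t + (-3)) := by unfold x0inv; split_ifs <;> linarith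
  have eL3 : x1fun ((4) * t + (-3)) = ((2) * t + (-1)) := by unfold x1fun; split_ifs <;> linarith
  have eL4 : x0fun ((2) * t + (-1)) = t := by unfold x0fun; split_ifs <;> linarith
  have eL5 : x0fun t = ((1/2) * t + (1/2)) := by unfold x0fun; split_ifs <;> linarith
  have eL6 : x1fun ((1/2) * t + (1/2)) = ((1/4) * t + (3/4)) := by unfold x1fun; split_ifs <;> linarith
  have eR7 : x1fun t = ((1/2) * t + (1/2)) := by unfold x1fun; split_ifs <;> linarith
  have eR8 : x0inv ((1/2) * t + (1/2)) = t := by unfold x0inv; split_ifs <;> linarith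
  have eR9 : x0inv t = ((2) * t + (-1)) := by unfold x0inv; split_ifs <;> linarith
  have eR10 : x0inv ((2) * t + (-1)) = ((4) * t + (-3)) := by unfold x0inv; split_ifs <;> linarith
  have eR11 : x1fun ((4) * t + (-3)) = ((2) * t + (-1)) := by unfold x1fun; split_ifs <;> linarith
  have eR12 : x0fun ((2) * t + (-1)) = t := by unfold x0fun; split_ifs <;> linarith
  have eR13 : x0fun t = ((1/2) * t + (1/2)) := by unfold x0fun; split_ifs <;> linarith
  have eR14 : x0fun ((1/2) * t + (1/2)) = ((1/4) * t + (3/4)) := by unfold x0fun; split_ifs <;> linarith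
  simp only [eL1, eL2, eL3, eL4, eL5, eL6, eR7, eR8, eR9, eR10, eR11, eR12, eR13, eR14]
  all_goals ring

lemma A13 (t : ℝ) (ht0 : 0 ≤ t) (ht1 : t ≤ 1) :
    x1fun (x0fun (x0fun (x1fun (x0inv (x0inv t))))) = x0fun (x0fun (x0fun (x1fun (x0inv (x0inv (x0inv (x1fun t))))))) := by
  rcases le_or_gt t (1/2) with hc0|hc0
  · exact A13_i0 t ht0 hc0
  rcases le_or_gt t (5/8) with hc1|hc1
  · exact A13_i1 t hc0 hc1
  rcases le_or_gt t (3/4) with hc2|hc2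
  · exact A13_i2 t hc1 hc2
  rcases le_or_gt t (7/8) with hc3|hc3
  · exact A13_i3 t hc2 hc3
  rcases le_or_gt t (29/32) with hc4|hc4
  · exact A13_i4 t hc3 hc4
  rcases le_or_gt t (15/16) with hc5|hc5
  · exact A13_i5 t hc4 hc5
  exact A13_i6 t hc5 ht1

-- ==================== auxiliary lemmas for stmt2 ====================

lemma x_zero' : x 0 = x₀ := by simp [x]

lemma x_one' : x 1 = x₁ := by simp [x]

lemma x_def_succ (m : ℕ) : x (m+1) = x₀ ^ m * x₁ * (x₀ ^ m)⁻¹ := by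
  simp [x]

lemma x_succ' (m : ℕ) : x (m+2) = x₀ * x (m+1) * x₀⁻¹ := by
  have h1 : x (m+2) = x₀ ^ (m+1) * x₁ * (x₀ ^ (m+1))⁻¹ := x_def_succ (m+1)
  rw [h1, x_def_succ m, pow_succ]
  group

lemma conj_mul' (u v w z : Equiv.Perm I) (h : u * v = w * z) :
    (x₀ * u * x₀⁻¹) * (x₀ * v * x₀⁻¹) = (x₀ * w * x₀⁻¹) * (x₀ * z * x₀⁻¹) := by
  calc (x₀ * u * x₀⁻¹) * (x₀ * v * x₀⁻¹) = x₀ * (u * v) * x₀⁻¹ := by group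
    _ = x₀ * (w * z) * x₀⁻¹ := by rw [h]
    _ = (x₀ * w * x₀⁻¹) * (x₀ * z * x₀⁻¹) := by group

lemma rel12 : x 1 * x 2 = x 3 * x 1 := by
  have h2 : x 2 = x₀ * x₁ * x₀⁻¹ := by rw [x_def_succ 1]; group
  have h3 : x 3 = x₀ * x₀ * x₁ * x₀⁻¹ * x₀⁻¹ := by
    have e : x 3 = x₀ * x 2 * x₀⁻¹ := x_succ' 1
    rw [e, h2]; group
  rw [x_one', h2, h3]
  apply Equiv.ext
  intro t
  apply Subtype.ext
  exact A12 t.1 t.2.1 t.2.2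

lemma rel13 : x 1 * x 3 = x 4 * x 1 := by
  have h2 : x 2 = x₀ * x₁ * x₀⁻¹ := by rw [x_def_succ 1]; group
  have h3 : x 3 = x₀ * x₀ * x₁ * x₀⁻¹ * x₀⁻¹ := by
    have e : x 3 = x₀ * x 2 * x₀⁻¹ := x_succ' 1
    rw [e, h2]; group
  have h4 : x 4 = x₀ * x₀ * x₀ * x₁ * x₀⁻¹ * x₀⁻¹ * x₀⁻¹ := by
    have e : x 4 = x₀ * x 3 * x₀⁻¹ := x_succ' 2
    rw [e, h3]; group
  rw [x_one', h3, h4]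
  apply Equiv.ext
  intro t
  apply Subtype.ext
  exact A13 t.1 t.2.1 t.2.2

lemma T1 : ∀ m : ℕ, x 1 * x (m+2) = x (m+3) * x 1 := by
  intro m
  induction m using Nat.strong_induction_on with
  | _ m IH =>
    match m with
    | 0 => exact rel12
    | 1 => exact rel13
    | (k+2) =>
      show x 1 * x (k+4) = x (k+5) * x 1
      have IHk : x 1 * x (k+2) = x (k+3) * x 1 := IH k (by omega)
      have IHk1 : x 1 * x (k+3) = x (k+4) * x 1 := IH (k+1) (by omega)
      have h2 : x 2 = x₀ * x 1 * x₀⁻¹ := by rw [x_one', x_def_succ 1]; group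
      have e2 : x (k+3) = x₀ * x (k+2) * x₀⁻¹ := x_succ' (k+1)
      have e3 : x (k+4) = x₀ * x (k+3) * x₀⁻¹ := x_succ' (k+2)
      have e4 : x (k+5) = x₀ * x (k+4) * x₀⁻¹ := x_succ' (k+3)
      have h3 : x 3 = x₀ * x 2 * x₀⁻¹ := x_succ' 1
      have rel2 : x 2 * x (k+3) = x (k+4) * x 2 := by
        rw [h2, e2, e3]; exact conj_mul' _ _ _ _ IHk
      have rel3 : x 3 * x (k+4) = x (k+5) * x 3 := by
        rw [h3, e3, e4]; exact conj_mul' _ _ _ _ rel2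
      have key : x 1 * x (k+4) * x 2 = x (k+5) * x 1 * x 2 := by
        calc x 1 * x (k+4) * x 2
            = x 1 * (x (k+4) * x 2) := by group
          _ = x 1 * (x 2 * x (k+3)) := by rw [← rel2]
          _ = (x 1 * x 2) * x (k+3) := by group
          _ = (x 3 * x 1) * x (k+3) := by rw [rel12]
          _ = x 3 * (x 1 * x (k+3)) := by group
          _ = x 3 * (x (k+4) * x 1) := by rw [IHk1]
          _ = (x 3 * x (k+4)) * x 1 := by group
          _ = (x (k+5) * x 3) * x 1 := by rw [rel3]
          _ = x (k+5) * (x 3 * x 1) := by group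
          _ = x (k+5) * (x 1 * x 2) := by rw [← rel12]
          _ = x (k+5) * x 1 * x 2 := by group
      exact mul_right_cancel key

lemma relGen : ∀ n k : ℕ, n < k → x n * x k = x (k+1) * x n := by
  intro n
  induction n with
  | zero =>
    intro k hk
    obtain ⟨m, rfl⟩ : ∃ m, k = m+1 := ⟨k-1, by omega⟩
    rw [x_zero']
    show x₀ * x (m+1) = x (m+2) * x₀
    rw [x_succ' m]
    group
  | succ n IHn =>
    intro k hk
    rcases n with _ | p
    · -- n+1 = 1
      obtain ⟨m, rfl⟩ : ∃ m, k = m+2 := ⟨k-2, by omega⟩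
      exact T1 m
    · -- n+1 = p+2
      obtain ⟨j, rfl⟩ : ∃ j, k = j+2 := ⟨k-2, by omega⟩
      have h := IHn (j+1) (by omega)
      show x (p+2) * x (j+2) = x (j+3) * x (p+2)
      have ej : x (j+3) = x₀ * x (j+2) * x₀⁻¹ := x_succ' (j+1)
      rw [x_succ' p, x_succ' j, ej]
      exact conj_mul' _ _ _ _ h

-- membership lemmas

lemma r01' : x 0 * x 1 = x 2 * x 0 := relGen 0 1 (by omega)

lemma s00 : x 0 * x 0 ∈ G := by
  have e1 : x 2 * x 0 * (x 1)⁻¹ = x 0 := by rw [← r01']; group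
  have hid : (x 2 * x 0) * (x 2 * x 1)⁻¹ * (x 2 * x 0) = x 0 * x 0 := by
    calc (x 2 * x 0) * (x 2 * x 1)⁻¹ * (x 2 * x 0)
        = (x 2 * x 0 * (x 1)⁻¹) * x 0 := by group
      _ = x 0 * x 0 := by rw [e1]
  rw [← hid]
  exact mul_mem (mul_mem y0_mem_G (inv_mem y1_mem_G)) y0_mem_G

lemma s11 : x 1 * x 1 ∈ G := by
  have e1 : x 2 * x 0 * (x 1)⁻¹ = x 0 := by rw [← r01']; group
  have r02 : x 0 * x 2 = x 3 * x 0 := relGen 0 2 (by omega)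
  have e2 : x 0 * (x 2)⁻¹ = (x 3)⁻¹ * x 0 := by
    calc x 0 * (x 2)⁻¹ = (x 3)⁻¹ * (x 3 * x 0) * (x 2)⁻¹ := by group
      _ = (x 3)⁻¹ * (x 0 * x 2) * (x 2)⁻¹ := by rw [r02]
      _ = (x 3)⁻¹ * x 0 := by group
  have hid : (x 2 * x 0) * (x 2 * x 1)⁻¹ * (x 2 * x 0)⁻¹ * ((x 2 * x 1) * (x 2 * x 1))
      = x 1 * x 1 := by
    calc (x 2 * x 0) * (x 2 * x 1)⁻¹ * (x 2 * x 0)⁻¹ * ((x 2 * x 1) * (x 2 * x 1))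
        = (x 2 * x 0 * (x 1)⁻¹) * ((x 2)⁻¹ * (x 0)⁻¹ * x 1 * x 2 * x 1) := by group
      _ = x 0 * ((x 2)⁻¹ * (x 0)⁻¹ * x 1 * x 2 * x 1) := by rw [e1]
      _ = (x 0 * (x 2)⁻¹) * ((x 0)⁻¹ * x 1 * x 2 * x 1) := by group
      _ = ((x 3)⁻¹ * x 0) * ((x 0)⁻¹ * x 1 * x 2 * x 1) := by rw [e2]
      _ = (x 3)⁻¹ * (x 1 * x 2) * x 1 := by group
      _ = (x 3)⁻¹ * (x 3 * x 1) * x 1 := by rw [rel12]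
      _ = x 1 * x 1 := by group
  rw [← hid]
  exact mul_mem (mul_mem (mul_mem y0_mem_G (inv_mem y1_mem_G)) (inv_mem y0_mem_G))
    (mul_mem y1_mem_G y1_mem_G)

lemma conj_x1 : (x 2 * x 0) * x 1 * (x 2 * x 0)⁻¹ = x 2 := by
  calc (x 2 * x 0) * x 1 * (x 2 * x 0)⁻¹
      = x 2 * (x 0 * x 1) * (x 0)⁻¹ * (x 2)⁻¹ := by group
    _ = x 2 * (x 2 * x 0) * (x 0)⁻¹ * (x 2)⁻¹ := by rw [r01']
    _ = x 2 := by group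

lemma conj_xk (k : ℕ) (hk : 2 ≤ k) : (x 2 * x 0) * x k * (x 2 * x 0)⁻¹ = x (k+2) := by
  have h0k : x 0 * x k = x (k+1) * x 0 := relGen 0 k (by omega)
  have h2k : x 2 * x (k+1) = x (k+2) * x 2 := relGen 2 (k+1) (by omega)
  calc (x 2 * x 0) * x k * (x 2 * x 0)⁻¹
      = x 2 * (x 0 * x k) * (x 0)⁻¹ * (x 2)⁻¹ := by group
    _ = x 2 * (x (k+1) * x 0) * (x 0)⁻¹ * (x 2)⁻¹ := by rw [h0k]
    _ = (x 2 * x (k+1)) * (x 2)⁻¹ := by group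
    _ = (x (k+2) * x 2) * (x 2)⁻¹ := by rw [h2k]
    _ = x (k+2) := by group

lemma M22mem : x 2 * x 2 ∈ G := by
  have hid : (x 2 * x 0) * (x 1 * x 1) * (x 2 * x 0)⁻¹ = x 2 * x 2 := by
    calc (x 2 * x 0) * (x 1 * x 1) * (x 2 * x 0)⁻¹
        = ((x 2 * x 0) * x 1 * (x 2 * x 0)⁻¹) * ((x 2 * x 0) * x 1 * (x 2 * x 0)⁻¹) := by group
      _ = x 2 * x 2 := by rw [conj_x1]
  rw [← hid]
  exact mul_mem (mul_mem y0_mem_G s11) (inv_mem y0_mem_G)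

lemma h12mem : x 1 * x 2 ∈ G := by
  have e : x 1 * x 2 = (x 1 * x 1) * ((x 2 * x 1)⁻¹ * (x 2 * x 2)) := by group
  rw [e]
  exact mul_mem s11 (mul_mem (inv_mem y1_mem_G) M22mem)

lemma COL : ∀ k : ℕ, x k * x 2 ∈ G := by
  intro k
  induction k using Nat.strong_induction_on with
  | _ k IH =>
    match k with
    | 0 =>
      have e : x 0 * x 2 = (x 0 * x 0) * ((x 2 * x 0)⁻¹ * (x 2 * x 2)) := by group
      rw [e]
      exact mul_mem s00 (mul_mem (inv_mem y0_mem_G) M22mem)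
    | 1 => exact h12mem
    | 2 => exact M22mem
    | 3 =>
      have e : x 3 * x 2 = (x 3 * x 1) * ((x 2 * x 1)⁻¹ * (x 2 * x 2)) := by group
      rw [e, ← rel12]
      exact mul_mem h12mem (mul_mem (inv_mem y1_mem_G) M22mem)
    | (m+4) =>
      -- first get x (m+2) * x 1 ∈ G
      have col1 : x (m+2) * x 1 ∈ G := by
        match m with
        | 0 => exact y1_mem_G
        | 1 =>
          show x 3 * x 1 ∈ G
          rw [← rel12]; exact h12mem
        | (i+2) =>
          show x (i+4) * x 1 ∈ G
          have hT : x 1 * x (i+3) = x (i+4) * x 1 := T1 (i+1)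
          have hx2 : x 2 * x (i+3) = x (i+4) * x 2 := relGen 2 (i+3) (by omega)
          have hmem2 : x 2 * x (i+3) ∈ G := by
            rw [hx2]; exact IH (i+4) (by omega)
          have h1m : x 1 * x (i+3) ∈ G := by
            have e : x 1 * x (i+3) = (x 1 * x 1) * ((x 2 * x 1)⁻¹ * (x 2 * x (i+3))) := by group
            rw [e]
            exact mul_mem s11 (mul_mem (inv_mem y1_mem_G) hmem2)
          rw [← hT]; exact h1m
      have cc : (x 2 * x 0) * x (m+2) * (x 2 * x 0)⁻¹ = x (m+4) := conj_xk (m+2) (by omega)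
      have hid : x (m+4) * x 2 = (x 2 * x 0) * (x (m+2) * x 1) * (x 2 * x 0)⁻¹ := by
        calc x (m+4) * x 2
            = ((x 2 * x 0) * x (m+2) * (x 2 * x 0)⁻¹) * ((x 2 * x 0) * x 1 * (x 2 * x 0)⁻¹) := by
              rw [cc, conj_x1]
          _ = (x 2 * x 0) * (x (m+2) * x 1) * (x 2 * x 0)⁻¹ := by group
      rw [hid]
      exact mul_mem (mul_mem y0_mem_G col1) (inv_mem y0_mem_G)

lemma ROW : ∀ k : ℕ, x 2 * x k ∈ G := by
  intro k
  match k with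
  | 0 => exact y0_mem_G
  | 1 => exact y1_mem_G
  | 2 => exact M22mem
  | (m+3) =>
    have r : x 2 * x (m+3) = x (m+4) * x 2 := relGen 2 (m+3) (by omega)
    rw [r]
    exact COL (m+4)

/-- For all `i, j ≥ 0` and signs `ε, δ ∈ {1, -1}`, the element `x_i^ε x_j^δ`
belongs to `G`.  (The paper product `x_i^ε x_j^δ`, with composition left-to-right, is the Lean
element `x j ^ δ * x i ^ ε`.) -/
theorem stmt2 (i j : ℕ) (ε δ : ℤ) (hε : ε = 1 ∨ ε = -1) (hδ : δ = 1 ∨ δ = -1) :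
    x j ^ δ * x i ^ ε ∈ G := by
  rcases hε with rfl | rfl <;> rcases hδ with rfl | rfl
  · -- ε = 1, δ = 1
    rw [zpow_one, zpow_one]
    have e : x j * x i = (x j * x 2) * ((x 2 * x 2)⁻¹ * (x 2 * x i)) := by group
    rw [e]
    exact mul_mem (COL j) (mul_mem (inv_mem M22mem) (ROW i))
  · -- ε = 1, δ = -1
    rw [zpow_neg_one, zpow_one]
    have e : (x j)⁻¹ * x i = (x 2 * x j)⁻¹ * (x 2 * x i) := by group
    rw [e]
    exact mul_mem (inv_mem (ROW j)) (ROW i)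
  · -- ε = -1, δ = 1
    rw [zpow_one, zpow_neg_one]
    have e : x j * (x i)⁻¹ = (x j * x 2) * (x i * x 2)⁻¹ := by group
    rw [e]
    exact mul_mem (COL j) (inv_mem (COL i))
  · -- ε = -1, δ = -1
    rw [zpow_neg_one, zpow_neg_one]
    have e : (x j)⁻¹ * (x i)⁻¹ = ((x i * x 2) * ((x 2 * x 2)⁻¹ * (x 2 * x j)))⁻¹ := by group
    rw [e]
    exact inv_mem (mul_mem (COL i) (mul_mem (inv_mem M22mem) (ROW j)))
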